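/- In the ring R = k[x,y,z,u]/(x²+yz, xy−yu, xz, xu, y²), the ideal quotients ((z) : (z,u)) = (x,z), ((z,u) : (x,z,u)) = (x,y,z,u), and ((x,z,u) : (x,y,z,u)) = (x,y,z,u) hold. -/
import Mathlib

open MvPolynomial

set_option synthInstance.maxHeartbeats 1000000
set_option maxHeartbeats 1000000

noncomputable section

/-- The defining ideal `(x²+yz, xy−yu, xz, xu, y²)` of Conca's ring, with
`x = X 0`, `y = X 1`, `z = X 2`, `u = X 3`. -/
def concaIdeal (k : Type*) [Field k] : Ideal (MvPolynomial (Fin 4) k) :=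
  Ideal.span {X 0 ^ 2 + X 1 * X 2, X 0 * X 1 - X 1 * X 3, X 0 * X 2, X 0 * X 3, X 1 ^ 2}

/-- The ring `R = k[x,y,z,u]/(x²+yz, xy−yu, xz, xu, y²)`. -/
abbrev ConcaRing (k : Type*) [Field k] := MvPolynomial (Fin 4) k ⧸ concaIdeal k

/-- The residue classes of the variables `x, y, z, u` in `R`. -/
def cv (k : Type*) [Field k] (i : Fin 4) : ConcaRing k :=
  Ideal.Quotient.mk (concaIdeal k) (X i)

section Aux
section Aux
variable {k : Type*} [Field k]

abbrev QQ (k : Type*) [Field k] := MvPolynomial (Fin 4) k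
lemma cmX0 (q : QQ k) (m : Fin 4 →₀ ℕ) (i : Fin 4) (h : m i = 0) :
    coeff m (q * X i) = 0 := by
  rw [coeff_mul_X']
  simp [Finsupp.mem_support_iff, h]

lemma span_vanish {L : QQ k → k} (h0 : L 0 = 0)
    (hadd : ∀ a b, L (a + b) = L a + L b)
    {S : Set (QQ k)} (hS : ∀ s ∈ S, ∀ q, L (q * s) = 0)
    {g : QQ k} (hg : g ∈ Ideal.span S) : L g = 0 := by
  have key : ∀ q : QQ k, L (q * g) = 0 := by
    induction hg using Submodule.span_induction with
    | mem x hx => exact hS x hx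
    | zero => intro q; simpa using h0
    | add x y hx hy ihx ihy => intro q; rw [mul_add, hadd, ihx, ihy]; ring
    | smul a x hx ih => intro q; rw [smul_eq_mul, ← mul_assoc]; exact ih (q * a)
  simpa using key 1

lemma monomial_mul_mem {S : Set (QQ k)} {m a : Fin 4 →₀ ℕ} (hma : a ≤ m)
    (h : (monomial a 1 : QQ k) ∈ Ideal.span S) (c : k) :
    (monomial m c : QQ k) ∈ Ideal.span S := by
  have : (monomial m c : QQ k) = monomial (m - a) c * monomial a 1 := by
    rw [monomial_mul, mul_one, tsub_add_cancel_of_le hma]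
  rw [this]
  exact Ideal.mul_mem_left _ _ h

lemma X_eq_monomial (i : Fin 4) : (X i : QQ k) = monomial (Finsupp.single i 1) 1 := rfl

lemma mem_span_X_of_const (f : QQ k) (h : coeff 0 f = 0) :
    f ∈ Ideal.span {(X 0 : QQ k), X 1, X 2, X 3} := by
  rw [← support_sum_monomial_coeff f]
  apply Ideal.sum_mem
  intro m hm
  have hc : coeff m f ≠ 0 := mem_support_iff.mp hm
  have hm0 : m ≠ 0 := by rintro rfl; exact hc h
  have : ∃ i, m i ≠ 0 := by
    by_contra hh
    push_neg at hh
    exact hm0 (Finsupp.ext fun i => hh i)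
  obtain ⟨i, hi⟩ := this
  have hle : Finsupp.single i 1 ≤ m := by rw [Finsupp.single_le_iff]; omega
  apply monomial_mul_mem hle
  rw [← X_eq_monomial]
  apply Ideal.subset_span
  fin_cases i <;> simp

lemma monB (f : QQ k) (hu : ∀ b : ℕ, coeff (Finsupp.single 3 b) f = 0)
    (hy : coeff (Finsupp.single 1 1) f = 0) :
    f ∈ Ideal.span {(X 0 : QQ k), X 2, X 1 * X 3, X 1 ^ 2} := by
  rw [← support_sum_monomial_coeff f]
  apply Ideal.sum_mem
  intro m hm
  have hc : coeff m f ≠ 0 := mem_support_iff.mp hm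
  by_cases h0 : m 0 ≠ 0
  · apply monomial_mul_mem (a := Finsupp.single 0 1) (by rw [Finsupp.single_le_iff]; omega)
    rw [← X_eq_monomial]
    exact Ideal.subset_span (by simp)
  by_cases h2 : m 2 ≠ 0
  · apply monomial_mul_mem (a := Finsupp.single 2 1) (by rw [Finsupp.single_le_iff]; omega)
    rw [← X_eq_monomial]
    exact Ideal.subset_span (by simp)
  push_neg at h0 h2
  rcases Nat.lt_or_ge (m 1) 1 with h1 | h1
  · exfalso
    have : m = Finsupp.single 3 (m 3) := by
      ext i
      fin_cases i <;> simp [Finsupp.single_apply, *] <;> omega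
    rw [this] at hc
    exact hc (hu (m 3))
  rcases Nat.lt_or_ge (m 1) 2 with h1' | h1'
  · by_cases h3 : m 3 = 0
    · exfalso
      have : m = Finsupp.single 1 1 := by
        ext i
        fin_cases i <;> simp [Finsupp.single_apply, *] <;> omega
      rw [this] at hc
      exact hc hy
    · apply monomial_mul_mem (a := Finsupp.single 1 1 + Finsupp.single 3 1) ?_ ?_
      · rw [Finsupp.le_def]
        intro i
        fin_cases i <;> simp [Finsupp.single_apply, Finsupp.add_apply, *] <;> omega
      · have hXX : (X 1 * X 3 : QQ k) =
            monomial (Finsupp.single 1 1 + Finsupp.single 3 1) 1 := by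
          rw [X_eq_monomial, X_eq_monomial, monomial_mul, mul_one]
        rw [← hXX]
        exact Ideal.subset_span (by simp)
  · apply monomial_mul_mem (a := Finsupp.single 1 2) (by rw [Finsupp.single_le_iff]; omega)
    rw [← X_pow_eq_monomial]
    exact Ideal.subset_span (by simp)

lemma key1 (f : QQ k)
    (h : f * X 3 ∈ Ideal.span {(X 2 : QQ k), X 0 ^ 2 + X 1 * X 2,
      X 0 * X 1 - X 1 * X 3, X 0 * X 2, X 0 * X 3, X 1 ^ 2}) :
    f ∈ Ideal.span {(X 0 : QQ k), X 2, X 0 ^ 2 + X 1 * X 2,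
      X 0 * X 1 - X 1 * X 3, X 0 * X 2, X 0 * X 3, X 1 ^ 2} := by
  have hu : ∀ b : ℕ, coeff (Finsupp.single 3 b) f = 0 := by
    intro b
    have hv : coeff (Finsupp.single 3 (b + 1)) (f * X 3) = 0 := by
      refine span_vanish (by simp) (fun a b => coeff_add _ _ _) ?_ h
      intro s hs q
      simp only [Set.mem_insert_iff, Set.mem_singleton_iff] at hs
      rcases hs with rfl | rfl | rfl | rfl | rfl | rfl <;>
        simp [coeff_mul_X', Finsupp.mem_support_iff, Finsupp.add_apply, Finsupp.single_apply,
          Finsupp.tsub_apply, coeff_sub, coeff_add, mul_sub, mul_add, ← mul_assoc, pow_two,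
          Finsupp.single_eq_of_ne]
    rwa [Finsupp.single_add, coeff_mul_X] at hv
  have hy : coeff (Finsupp.single 1 1) f = 0 := by
    have hv : (coeff (Finsupp.single 1 1 + Finsupp.single 3 1) (f * X 3) +
        coeff (Finsupp.single 0 1 + Finsupp.single 1 1) (f * X 3) : k) = 0 := by
      refine span_vanish (L := fun g => coeff (Finsupp.single 1 1 + Finsupp.single 3 1) g +
          coeff (Finsupp.single 0 1 + Finsupp.single 1 1) g) (by simp)
        (fun a b => by simp only [coeff_add]; ring) ?_ h
      intro s hs q
      simp only [Set.mem_insert_iff, Set.mem_singleton_iff] at hs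
      rcases hs with rfl | rfl | rfl | rfl | rfl | rfl <;>
        simp [coeff_mul_X', Finsupp.mem_support_iff, Finsupp.add_apply, Finsupp.single_apply,
          Finsupp.tsub_apply, coeff_sub, coeff_add, mul_sub, mul_add, ← mul_assoc, pow_two,
          Finsupp.single_eq_of_ne]
    rwa [coeff_mul_X, cmX0 f _ 3 (by simp [Finsupp.add_apply]), add_zero] at hv
  have hmem := monB f hu hy
  refine Ideal.span_le.mpr ?_ hmem
  rintro g (rfl | rfl | rfl | rfl)
  · exact Ideal.subset_span (by simp)
  · exact Ideal.subset_span (by simp)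
  · have : (X 1 * X 3 : QQ k) = X 0 * X 1 - (X 0 * X 1 - X 1 * X 3) := by ring
    rw [this]
    exact sub_mem (Ideal.mul_mem_right _ _ (Ideal.subset_span (by simp)))
      (Ideal.subset_span (by simp))
  · exact Ideal.subset_span (by simp)

lemma key2 (f : QQ k)
    (h : f * X 0 ∈ Ideal.span {(X 2 : QQ k), X 3, X 0 ^ 2 + X 1 * X 2,
      X 0 * X 1 - X 1 * X 3, X 0 * X 2, X 0 * X 3, X 1 ^ 2}) :
    f ∈ Ideal.span {(X 0 : QQ k), X 1, X 2, X 3} := by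
  apply mem_span_X_of_const
  have hv : coeff (Finsupp.single 0 1) (f * X 0) = 0 := by
    refine span_vanish (by simp) (fun a b => coeff_add _ _ _) ?_ h
    intro s hs q
    simp only [Set.mem_insert_iff, Set.mem_singleton_iff] at hs
    rcases hs with rfl | rfl | rfl | rfl | rfl | rfl | rfl <;>
      simp [coeff_mul_X', Finsupp.mem_support_iff, Finsupp.add_apply, Finsupp.single_apply,
        Finsupp.tsub_apply, coeff_sub, coeff_add, mul_sub, mul_add, ← mul_assoc, pow_two,
        Finsupp.single_eq_of_ne]
  rwa [show Finsupp.single (0 : Fin 4) 1 = 0 + Finsupp.single 0 1 from (zero_add _).symm,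
    coeff_mul_X] at hv

lemma key3 (f : QQ k)
    (h : f * X 1 ∈ Ideal.span {(X 0 : QQ k), X 2, X 3, X 0 ^ 2 + X 1 * X 2,
      X 0 * X 1 - X 1 * X 3, X 0 * X 2, X 0 * X 3, X 1 ^ 2}) :
    f ∈ Ideal.span {(X 0 : QQ k), X 1, X 2, X 3} := by
  apply mem_span_X_of_const
  have hv : coeff (Finsupp.single 1 1) (f * X 1) = 0 := by
    refine span_vanish (by simp) (fun a b => coeff_add _ _ _) ?_ h
    intro s hs q
    simp only [Set.mem_insert_iff, Set.mem_singleton_iff] at hs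
    rcases hs with rfl | rfl | rfl | rfl | rfl | rfl | rfl | rfl <;>
      simp [coeff_mul_X', Finsupp.mem_support_iff, Finsupp.add_apply, Finsupp.single_apply,
        Finsupp.tsub_apply, coeff_sub, coeff_add, mul_sub, mul_add, ← mul_assoc, pow_two,
        Finsupp.single_eq_of_ne]
  rwa [show Finsupp.single (1 : Fin 4) 1 = 0 + Finsupp.single 1 1 from (zero_add _).symm,
    coeff_mul_X] at hv
lemma mem_colon_span {R : Type*} [CommRing R] {I : Ideal R} {T : Set R} {r : R}
    (h : ∀ t ∈ T, r * t ∈ I) : r ∈ Submodule.colon I (Ideal.span T) := by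
  rw [Submodule.mem_colon]
  intro p hp
  induction hp using Submodule.span_induction with
  | mem x hx => rw [smul_eq_mul]; exact h x hx
  | zero => simp
  | add x y hx hy ihx ihy => rw [smul_add]; exact Submodule.add_mem _ ihx ihy
  | smul a x hx ih => rw [smul_comm]; exact Submodule.smul_mem _ _ ih

lemma mk_zero {p : QQ k} (hp : p ∈ concaIdeal k) :
    Ideal.Quotient.mk (concaIdeal k) p = 0 :=
  Ideal.Quotient.eq_zero_iff_mem.mpr hp

lemma z02 : cv k 0 * cv k 2 = 0 := by
  simp only [cv]; rw [← map_mul]; exact mk_zero (Ideal.subset_span (by simp))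

lemma z03 : cv k 0 * cv k 3 = 0 := by
  simp only [cv]; rw [← map_mul]; exact mk_zero (Ideal.subset_span (by simp))

lemma z11 : cv k 1 * cv k 1 = 0 := by
  simp only [cv]; rw [← map_mul]
  apply mk_zero
  rw [show (X 1 * X 1 : QQ k) = X 1 ^ 2 by ring]
  exact Ideal.subset_span (by simp)

lemma e00 : cv k 0 * cv k 0 = -(cv k 1 * cv k 2) := by
  simp only [cv]; rw [← map_mul, ← map_mul, eq_neg_iff_add_eq_zero, ← map_add]
  apply mk_zero
  rw [show (X 0 * X 0 + X 1 * X 2 : QQ k) = X 0 ^ 2 + X 1 * X 2 by ring]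
  exact Ideal.subset_span (by simp)

lemma e10 : cv k 1 * cv k 0 = cv k 1 * cv k 3 := by
  simp only [cv]; rw [← map_mul, ← map_mul, ← sub_eq_zero, ← map_sub]
  apply mk_zero
  rw [show (X 1 * X 0 - X 1 * X 3 : QQ k) = X 0 * X 1 - X 1 * X 3 by ring]
  exact Ideal.subset_span (by simp)

lemma cvspan1 (i : Fin 4) :
    Ideal.span {cv k i} =
      Ideal.map (Ideal.Quotient.mk (concaIdeal k)) (Ideal.span {X i}) := by
  rw [Ideal.map_span]; congr 1; simp [cv]

lemma cvspan2 (i j : Fin 4) :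
    Ideal.span {cv k i, cv k j} =
      Ideal.map (Ideal.Quotient.mk (concaIdeal k)) (Ideal.span {X i, X j}) := by
  rw [Ideal.map_span]; congr 1; simp [cv, Set.image_insert_eq]

lemma cvspan3 (i j l : Fin 4) :
    Ideal.span {cv k i, cv k j, cv k l} =
      Ideal.map (Ideal.Quotient.mk (concaIdeal k)) (Ideal.span {X i, X j, X l}) := by
  rw [Ideal.map_span]; congr 1; simp [cv, Set.image_insert_eq]

lemma cvspan4 (i j l n : Fin 4) :
    Ideal.span {cv k i, cv k j, cv k l, cv k n} =
      Ideal.map (Ideal.Quotient.mk (concaIdeal k)) (Ideal.span {X i, X j, X l, X n}) := by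
  rw [Ideal.map_span]; congr 1; simp [cv, Set.image_insert_eq]

end Aux

theorem stmt_4 (k : Type*) [Field k] :
    Submodule.colon (Ideal.span {cv k 2}) (Ideal.span {cv k 2, cv k 3}) =
      Ideal.span {cv k 0, cv k 2} ∧
    Submodule.colon (Ideal.span {cv k 2, cv k 3}) (Ideal.span {cv k 0, cv k 2, cv k 3}) =
      Ideal.span {cv k 0, cv k 1, cv k 2, cv k 3} ∧
    Submodule.colon (Ideal.span {cv k 0, cv k 2, cv k 3})
        (Ideal.span {cv k 0, cv k 1, cv k 2, cv k 3}) =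
      Ideal.span {cv k 0, cv k 1, cv k 2, cv k 3} := by
  refine ⟨?_, ?_, ?_⟩
  · -- ((z) : (z,u)) = (x,z)
    apply le_antisymm
    · intro r hr
      obtain ⟨f, rfl⟩ := Ideal.Quotient.mk_surjective r
      have h0 := Submodule.mem_colon.mp hr (cv k 3) (Ideal.subset_span (by simp))
      rw [smul_eq_mul, show cv k 3 = Ideal.Quotient.mk (concaIdeal k) (X 3) from rfl,
        ← map_mul, cvspan1, Ideal.mem_quotient_iff_mem_sup, concaIdeal,
        ← Ideal.span_union, Set.singleton_union] at h0
      rw [cvspan2, Ideal.mem_quotient_iff_mem_sup, concaIdeal, ← Ideal.span_union,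
        Set.insert_union, Set.singleton_union]
      exact key1 f h0
    · rw [Ideal.span_le]
      intro g hg
      simp only [Set.mem_insert_iff, Set.mem_singleton_iff] at hg
      rcases hg with rfl | rfl
      · apply mem_colon_span
        intro t ht
        simp only [Set.mem_insert_iff, Set.mem_singleton_iff] at ht
        rcases ht with rfl | rfl
        · rw [z02]; exact Ideal.zero_mem _
        · rw [z03]; exact Ideal.zero_mem _
      · apply mem_colon_span
        intro t ht
        exact Ideal.mul_mem_right _ _ (Ideal.subset_span (by simp))
  · -- ((z,u) : (x,z,u)) = (x,y,z,u)
    apply le_antisymm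
    · intro r hr
      obtain ⟨f, rfl⟩ := Ideal.Quotient.mk_surjective r
      have h0 := Submodule.mem_colon.mp hr (cv k 0) (Ideal.subset_span (by simp))
      rw [smul_eq_mul, show cv k 0 = Ideal.Quotient.mk (concaIdeal k) (X 0) from rfl,
        ← map_mul, cvspan2, Ideal.mem_quotient_iff_mem_sup, concaIdeal,
        ← Ideal.span_union, Set.insert_union, Set.singleton_union] at h0
      rw [cvspan4, Ideal.mem_quotient_iff_mem_sup]
      exact Ideal.mem_sup_left (key2 f h0)
    · rw [Ideal.span_le]
      intro g hg
      simp only [Set.mem_insert_iff, Set.mem_singleton_iff] at hg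
      have hz : cv k 2 ∈ Ideal.span {cv k 2, cv k 3} := Ideal.subset_span (by simp)
      have hu : cv k 3 ∈ Ideal.span {cv k 2, cv k 3} := Ideal.subset_span (by simp)
      rcases hg with rfl | rfl | rfl | rfl <;>
        apply mem_colon_span <;> intro t ht <;>
        simp only [Set.mem_insert_iff, Set.mem_singleton_iff] at ht
      · rcases ht with rfl | rfl | rfl
        · rw [e00]; exact neg_mem (Ideal.mul_mem_left _ _ hz)
        · exact Ideal.mul_mem_left _ _ hz
        · exact Ideal.mul_mem_left _ _ hu
      · rcases ht with rfl | rfl | rfl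
        · rw [e10]; exact Ideal.mul_mem_left _ _ hu
        · exact Ideal.mul_mem_left _ _ hz
        · exact Ideal.mul_mem_left _ _ hu
      · rcases ht with rfl | rfl | rfl
        · rw [mul_comm, z02]; exact Ideal.zero_mem _
        · exact Ideal.mul_mem_left _ _ hz
        · exact Ideal.mul_mem_left _ _ hu
      · rcases ht with rfl | rfl | rfl
        · rw [mul_comm, z03]; exact Ideal.zero_mem _
        · exact Ideal.mul_mem_left _ _ hz
        · exact Ideal.mul_mem_left _ _ hu
  · -- ((x,z,u) : (x,y,z,u)) = (x,y,z,u)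
    apply le_antisymm
    · intro r hr
      obtain ⟨f, rfl⟩ := Ideal.Quotient.mk_surjective r
      have h0 := Submodule.mem_colon.mp hr (cv k 1) (Ideal.subset_span (by simp))
      rw [smul_eq_mul, show cv k 1 = Ideal.Quotient.mk (concaIdeal k) (X 1) from rfl,
        ← map_mul, cvspan3, Ideal.mem_quotient_iff_mem_sup, concaIdeal,
        ← Ideal.span_union, Set.insert_union, Set.insert_union, Set.singleton_union] at h0
      rw [cvspan4, Ideal.mem_quotient_iff_mem_sup]
      exact Ideal.mem_sup_left (key3 f h0)
    · rw [Ideal.span_le]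
      intro g hg
      simp only [Set.mem_insert_iff, Set.mem_singleton_iff] at hg
      have hx : cv k 0 ∈ Ideal.span {cv k 0, cv k 2, cv k 3} := Ideal.subset_span (by simp)
      have hz : cv k 2 ∈ Ideal.span {cv k 0, cv k 2, cv k 3} := Ideal.subset_span (by simp)
      have hu : cv k 3 ∈ Ideal.span {cv k 0, cv k 2, cv k 3} := Ideal.subset_span (by simp)
      rcases hg with rfl | rfl | rfl | rfl <;>
        apply mem_colon_span <;> intro t ht <;>
        simp only [Set.mem_insert_iff, Set.mem_singleton_iff] at ht
      · rcases ht with rfl | rfl | rfl | rfl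
        · exact Ideal.mul_mem_left _ _ hx
        · exact Ideal.mul_mem_right _ _ hx
        · exact Ideal.mul_mem_left _ _ hz
        · exact Ideal.mul_mem_left _ _ hu
      · rcases ht with rfl | rfl | rfl | rfl
        · exact Ideal.mul_mem_left _ _ hx
        · rw [z11]; exact Ideal.zero_mem _
        · exact Ideal.mul_mem_left _ _ hz
        · exact Ideal.mul_mem_left _ _ hu
      · rcases ht with rfl | rfl | rfl | rfl
        · exact Ideal.mul_mem_left _ _ hx
        · exact Ideal.mul_mem_right _ _ hz
        · exact Ideal.mul_mem_left _ _ hz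
        · exact Ideal.mul_mem_left _ _ hu
      · rcases ht with rfl | rfl | rfl | rfl
        · exact Ideal.mul_mem_left _ _ hx
        · exact Ideal.mul_mem_right _ _ hu
        · exact Ideal.mul_mem_left _ _ hz
        · exact Ideal.mul_mem_left _ _ hu
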